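/- Let f : ℝ → ℝ be continuous and integrable, and set b = G₂∗f. Then b is continuously differentiable with b'(x) = ∫_ℝ ∂_xG₂(x−y) f(y) dy for every x, both b and b' belong to L²(ℝ), and ‖b‖_{L²(ℝ)}² + ‖b'‖_{L²(ℝ)}² ≤ (5/32) ‖f‖_{L¹(ℝ)}². -/

import Mathlib

open MeasureTheory

/-- The Green's function `G₂(x) = ¼ e^{-2|x|}` of `4 - ∂ₓ²`. -/
noncomputable def G2 (x : ℝ) : ℝ := (1 / 4) * Real.exp (-(2 * |x|))

/-- The derivative `∂ₓG₂(x) = -½ sgn(x) e^{-2|x|}`. -/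
noncomputable def G2x (x : ℝ) : ℝ := -(1 / 2) * Real.sign x * Real.exp (-(2 * |x|))

/-- Convolution `(G ∗ f)(x) = ∫ G(x - y) f(y) dy`. -/
noncomputable def conv (G f : ℝ → ℝ) (x : ℝ) : ℝ := ∫ y : ℝ, G (x - y) * f y

open Real Set Filter intervalIntegral
open scoped ENNReal NNReal

section Aux

/-- `Ee a x = exp (-(a * |x|))`. -/
noncomputable def Ee (a x : ℝ) : ℝ := Real.exp (-(a * |x|))

lemma Ee_cont (a : ℝ) : Continuous (Ee a) := by unfold Ee; fun_prop

lemma Ee_intOn_Ioi {a : ℝ} (ha : 0 < a) : IntegrableOn (Ee a) (Ioi 0) := by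
  have h1 : IntegrableOn (fun x : ℝ => Real.exp (-a * x)) (Ioi 0) :=
    exp_neg_integrableOn_Ioi 0 ha
  exact h1.congr_fun (fun x hx => by simp [Ee, abs_of_pos (mem_Ioi.mp hx), neg_mul])
    measurableSet_Ioi

lemma Ee_intOn_Iio {a : ℝ} (ha : 0 < a) : IntegrableOn (Ee a) (Iio 0) := by
  have mp : MeasurePreserving (fun x : ℝ => -x) (volume : Measure ℝ) volume :=
    Measure.measurePreserving_neg _
  have emb : MeasurableEmbedding (fun x : ℝ => -x) :=
    (Homeomorph.neg ℝ).measurableEmbedding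
  have key := (mp.integrableOn_comp_preimage emb (f := Ee a) (s := Iio 0)).mp
  have pre : (fun x : ℝ => -x) ⁻¹' (Iio 0) = Ioi 0 := by ext x; simp
  have : IntegrableOn (Ee a ∘ fun x : ℝ => -x) ((fun x : ℝ => -x) ⁻¹' (Iio 0)) volume := by
    rw [pre]
    exact (Ee_intOn_Ioi ha).congr_fun (fun x _ => by simp [Ee, Function.comp, abs_neg])
      measurableSet_Ioi
  exact key this

lemma Ee_integrable {a : ℝ} (ha : 0 < a) : Integrable (Ee a) := by
  rw [← integrableOn_univ, ← Iio_union_Ici (a := (0:ℝ))]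
  exact (Ee_intOn_Iio ha).union ((integrableOn_Ici_iff_integrableOn_Ioi).mpr (Ee_intOn_Ioi ha))

lemma hasDeriv_exp4 (x : ℝ) :
    HasDerivAt (fun u : ℝ => -(1/4) * Real.exp (-(4*u))) (Real.exp (-(4*x))) x := by
  have h1 : HasDerivAt (fun u : ℝ => -(4*u)) (-4) x := by
    simpa using ((hasDerivAt_id x).const_mul (-4 : ℝ))
  have h3 := h1.exp.const_mul (-(1/4) : ℝ)
  exact h3.congr_deriv (by ring)

lemma Ee4_integral : ∫ x : ℝ, Ee 4 x = 1 / 2 := by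
  have h0 : ∫ x : ℝ, Ee 4 x = 2 * ∫ x in Ioi (0:ℝ), Real.exp (-(4 * x)) :=
    integral_comp_abs (f := fun x => Real.exp (-(4 * x)))
  rw [h0]
  have h2 : ∫ x in Ioi (0:ℝ), Real.exp (-(4 * x)) = 1/4 := by
    have htend : Tendsto (fun u : ℝ => -(1/4) * Real.exp (-(4*u))) atTop (nhds 0) := by
      have h1 : Tendsto (fun u : ℝ => -(4*u)) atTop atBot :=
        tendsto_neg_atBot_iff.mpr (tendsto_id.const_mul_atTop (by norm_num))
      have h2 := Real.tendsto_exp_atBot.comp h1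
      simpa using h2.const_mul (-(1/4) : ℝ)
    have := integral_Ioi_of_hasDerivAt_of_tendsto' (f' := fun x : ℝ => Real.exp (-(4*x)))
      (fun x _ => hasDeriv_exp4 x) (by
        have h1 : IntegrableOn (fun x : ℝ => Real.exp (-4 * x)) (Ioi 0) :=
          exp_neg_integrableOn_Ioi 0 (by norm_num)
        simpa [neg_mul] using h1) htend
    rw [this]; norm_num
  rw [h2]; norm_num

lemma G2_cont : Continuous G2 := by unfold G2; fun_prop

lemma G2_meas : Measurable G2 := G2_cont.measurable

lemma sign_measurable : Measurable Real.sign := by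
  unfold Real.sign
  refine Measurable.ite measurableSet_Iio measurable_const ?_
  exact Measurable.ite (measurableSet_lt measurable_const measurable_id) measurable_const
    measurable_const

lemma G2x_meas : Measurable G2x := by
  unfold G2x
  exact (measurable_const.mul sign_measurable).mul (by fun_prop)

lemma sign_abs_le (x : ℝ) : |Real.sign x| ≤ 1 := by
  rcases Real.sign_apply_eq x with h | h | h <;> rw [h] <;> norm_num

lemma G2_abs_le (x : ℝ) : |G2 x| ≤ 1/4 := by
  unfold G2
  rw [abs_mul, abs_of_nonneg (le_of_lt (Real.exp_pos _))]
  calc |(1/4 : ℝ)| * Real.exp (-(2*|x|)) ≤ |(1/4 : ℝ)| * 1 := by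
        apply mul_le_mul_of_nonneg_left _ (abs_nonneg _)
        exact Real.exp_le_one_iff.mpr (neg_nonpos.mpr (by positivity))
    _ = 1/4 := by norm_num

lemma G2x_abs_le (x : ℝ) : |G2x x| ≤ 1/2 := by
  unfold G2x
  rw [abs_mul, abs_mul, abs_of_nonneg (le_of_lt (Real.exp_pos _))]
  have e1 : Real.exp (-(2*|x|)) ≤ 1 := Real.exp_le_one_iff.mpr (neg_nonpos.mpr (by positivity))
  have s1 : |Real.sign x| ≤ 1 := sign_abs_le x
  have s0 : (0:ℝ) ≤ |Real.sign x| := abs_nonneg _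
  have ep : (0:ℝ) < Real.exp (-(2*|x|)) := Real.exp_pos _
  have : |(-(1/2) : ℝ)| = 1/2 := by norm_num
  rw [this]
  nlinarith

lemma G2x_abs_le_Ee (x : ℝ) : |G2x x| ≤ (1/2) * Ee 2 x := by
  unfold G2x Ee
  rw [abs_mul, abs_mul, abs_of_nonneg (le_of_lt (Real.exp_pos _))]
  have s1 : |Real.sign x| ≤ 1 := sign_abs_le x
  have ep : (0:ℝ) < Real.exp (-(2*|x|)) := Real.exp_pos _
  have : |(-(1/2) : ℝ)| = 1/2 := by norm_num
  rw [this]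
  nlinarith [abs_nonneg (Real.sign x)]

lemma G2x_integrable : Integrable G2x := by
  refine (((Ee_integrable (by norm_num : (0:ℝ) < 2)).const_mul (1/2)).mono'
    G2x_meas.aestronglyMeasurable (ae_of_all _ fun x => ?_))
  simpa [Real.norm_eq_abs] using G2x_abs_le_Ee x

lemma ae_ne (c : ℝ) : ∀ᵐ u : ℝ, u ≠ c := by
  rw [MeasureTheory.ae_iff]
  simpa using Real.volume_singleton (x := c)

lemma G2_key (t : ℝ) : ∫ u in (0:ℝ)..t, G2x u = G2 t - 1/4 := by
  rcases le_total 0 t with ht | ht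
  · have hcongr : ∫ u in (0:ℝ)..t, G2x u = ∫ u in (0:ℝ)..t, -(1/2) * Real.exp (-(2*u)) := by
      rw [integral_of_le ht, integral_of_le ht]
      refine setIntegral_congr_fun measurableSet_Ioc (fun u hu => ?_)
      have hu0 : 0 < u := hu.1
      simp [G2x, Real.sign_of_pos hu0, abs_of_pos hu0]
    rw [hcongr]
    have hd : ∀ u ∈ uIcc (0:ℝ) t, HasDerivAt (fun v : ℝ => (1/4) * Real.exp (-(2*v)))
        (-(1/2) * Real.exp (-(2*u))) u := by
      intro u _
      have h1 : HasDerivAt (fun v : ℝ => -(2*v)) (-2) u := by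
        simpa using ((hasDerivAt_id u).const_mul (-2 : ℝ))
      have h3 := h1.exp.const_mul ((1/4) : ℝ)
      exact h3.congr_deriv (by ring)
    rw [integral_eq_sub_of_hasDerivAt hd ((Continuous.intervalIntegrable (by fun_prop) _ _))]
    simp [G2, abs_of_nonneg ht]
  · have hcongr : ∫ u in (0:ℝ)..t, G2x u = ∫ u in (0:ℝ)..t, (1/2) * Real.exp (2*u) := by
      rw [integral_symm, integral_symm t 0, integral_of_le ht, integral_of_le ht]
      congr 1
      refine setIntegral_congr_ae measurableSet_Ioc ?_
      filter_upwards [ae_ne 0] with u hu0 hu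
      have hneg : u < 0 := lt_of_le_of_ne (hu.2) hu0
      simp [G2x, Real.sign_of_neg hneg, abs_of_neg hneg]
    rw [hcongr]
    have hd : ∀ u ∈ uIcc (0:ℝ) t, HasDerivAt (fun v : ℝ => (1/4) * Real.exp (2*v))
        ((1/2) * Real.exp (2*u)) u := by
      intro u _
      have h1 : HasDerivAt (fun v : ℝ => 2*v) (2) u := by
        simpa using ((hasDerivAt_id u).const_mul (2 : ℝ))
      have h3 := h1.exp.const_mul ((1/4) : ℝ)
      exact h3.congr_deriv (by ring)
    rw [integral_eq_sub_of_hasDerivAt hd ((Continuous.intervalIntegrable (by fun_prop) _ _))]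
    have : |t| = -t := abs_of_nonpos ht
    simp [G2, this]

lemma G2_FTC (s t : ℝ) : ∫ u in s..t, G2x u = G2 t - G2 s := by
  have h1 : ∫ u in s..t, G2x u = (∫ u in (0:ℝ)..t, G2x u) - ∫ u in (0:ℝ)..s, G2x u := by
    rw [← integral_add_adjacent_intervals (a := s) (b := 0) (c := t)
      G2x_integrable.intervalIntegrable G2x_integrable.intervalIntegrable]
    rw [integral_symm]
    ring
  rw [h1, G2_key, G2_key]
  ring

lemma contAt_G2x {z : ℝ} (hz : z ≠ 0) : ContinuousAt G2x z := by
  rcases hz.lt_or_gt with h | h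
  · have hev : (fun x : ℝ => (1/2) * Real.exp (2*x)) =ᶠ[nhds z] G2x := by
      filter_upwards [Iio_mem_nhds h] with x hx
      have hx' : x < 0 := hx
      unfold G2x
      rw [Real.sign_of_neg hx', abs_of_neg hx', show -(2 * -x : ℝ) = 2*x by ring]
      ring
    exact ContinuousAt.congr (by fun_prop) hev
  · have hev : (fun x : ℝ => -(1/2) * Real.exp (-(2*x))) =ᶠ[nhds z] G2x := by
      filter_upwards [Ioi_mem_nhds h] with x hx
      have hx' : (0:ℝ) < x := hx
      unfold G2x
      rw [Real.sign_of_pos hx', abs_of_pos hx']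
      ring
    exact ContinuousAt.congr (by fun_prop) hev

end Aux

section Conv

variable {f : ℝ → ℝ} (hfc : Continuous f) (hfi : Integrable f)

include hfc hfi in
lemma conv_integrand_int {G : ℝ → ℝ} (hG : Measurable G) {C : ℝ} (hC : 0 ≤ C)
    (hCb : ∀ z, |G z| ≤ C) (x : ℝ) : Integrable (fun y => G (x - y) * f y) := by
  refine (hfi.norm.const_mul C).mono'
    ((hG.comp (measurable_const.sub measurable_id)).mul hfc.measurable).aestronglyMeasurable
    (ae_of_all _ fun y => ?_)
  rw [norm_mul, Real.norm_eq_abs]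
  exact mul_le_mul_of_nonneg_right (hCb _) (norm_nonneg _)

include hfc hfi in
lemma conv_G2x_cont : Continuous (conv G2x f) := by
  rw [continuous_iff_continuousAt]; intro x₀
  unfold conv
  refine continuousAt_of_dominated (bound := fun y => (1/2) * ‖f y‖) ?_ ?_ ?_ ?_
  · exact Eventually.of_forall fun x =>
      ((G2x_meas.comp (measurable_const.sub measurable_id)).mul
        hfc.measurable).aestronglyMeasurable
  · refine Eventually.of_forall fun x => ae_of_all _ fun y => ?_
    rw [norm_mul, Real.norm_eq_abs]
    exact mul_le_mul_of_nonneg_right (G2x_abs_le _) (norm_nonneg _)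
  · exact hfi.norm.const_mul _
  · filter_upwards [ae_ne x₀] with y hy
    have hzz : x₀ - y ≠ 0 := sub_ne_zero.mpr (Ne.symm hy)
    have c1 : ContinuousAt (fun x : ℝ => x - y) x₀ :=
      (continuous_id.sub continuous_const).continuousAt
    have c2 : ContinuousAt (G2x ∘ fun x : ℝ => x - y) x₀ := ContinuousAt.comp (contAt_G2x hzz) c1
    exact ContinuousAt.mul c2 continuousAt_const

include hfc hfi in
lemma interval_conv_le {s t : ℝ} (hst : s ≤ t) :
    ∫ u in s..t, conv G2x f u = conv G2 f t - conv G2 f s := by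
  have hint : Integrable (fun p : ℝ × ℝ => G2x (p.1 - p.2) * f p.2)
      ((volume.restrict (Ioc s t)).prod volume) := by
    have hmeas : AEStronglyMeasurable (fun p : ℝ × ℝ => G2x (p.1 - p.2) * f p.2)
        ((volume.restrict (Ioc s t)).prod volume) :=
      ((G2x_meas.comp (measurable_fst.sub measurable_snd)).mul
        (hfc.measurable.comp measurable_snd)).aestronglyMeasurable
    have h1 : Integrable (fun _ : ℝ => (1/2 : ℝ)) (volume.restrict (Ioc s t)) := by
      exact integrableOn_const measure_Ioc_lt_top.ne
    have hdom : Integrable (fun p : ℝ × ℝ => (1/2 : ℝ) * ‖f p.2‖)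
        ((volume.restrict (Ioc s t)).prod volume) := h1.mul_prod hfi.norm
    refine hdom.mono' hmeas (ae_of_all _ fun p => ?_)
    rw [norm_mul, Real.norm_eq_abs]
    exact mul_le_mul_of_nonneg_right (G2x_abs_le _) (norm_nonneg _)
  have swap := MeasureTheory.integral_integral_swap (f := fun u y => G2x (u - y) * f y) hint
  rw [intervalIntegral.integral_of_le hst]
  calc ∫ u in Ioc s t, conv G2x f u = ∫ y : ℝ, ∫ u in Ioc s t, G2x (u - y) * f y := swap
    _ = ∫ y : ℝ, (G2 (t - y) - G2 (s - y)) * f y := by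
        refine integral_congr_ae (Eventually.of_forall fun y => ?_)
        show (∫ u in Ioc s t, G2x (u - y) * f y) = (G2 (t - y) - G2 (s - y)) * f y
        rw [MeasureTheory.integral_mul_const, ← intervalIntegral.integral_of_le hst,
          intervalIntegral.integral_comp_sub_right (fun u => G2x u) y, G2_FTC]
    _ = conv G2 f t - conv G2 f s := by
        unfold conv
        rw [← integral_sub (conv_integrand_int hfc hfi G2_meas (by norm_num) G2_abs_le t)
          (conv_integrand_int hfc hfi G2_meas (by norm_num) G2_abs_le s)]
        refine integral_congr_ae (Eventually.of_forall fun y => ?_)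
        show (G2 (t - y) - G2 (s - y)) * f y = G2 (t - y) * f y - G2 (s - y) * f y
        ring

include hfc hfi in
lemma interval_conv (s t : ℝ) :
    ∫ u in s..t, conv G2x f u = conv G2 f t - conv G2 f s := by
  rcases le_total s t with h | h
  · exact interval_conv_le hfc hfi h
  · rw [intervalIntegral.integral_symm, interval_conv_le hfc hfi h]; ring

include hfc hfi in
lemma conv_G2_hasDeriv (x : ℝ) : HasDerivAt (conv G2 f) (conv G2x f x) x := by
  have hg : Continuous (conv G2x f) := conv_G2x_cont hfc hfi
  have h1 : HasDerivAt (fun u : ℝ => conv G2 f 0 + ∫ t in (0:ℝ)..u, conv G2x f t)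
      (conv G2x f x) x := ((hg.integral_hasStrictDerivAt 0 x).hasDerivAt).const_add _
  refine h1.congr_of_eventuallyEq (Eventually.of_forall fun u => ?_)
  show conv G2 f u = conv G2 f 0 + ∫ t in (0:ℝ)..u, conv G2x f t
  rw [interval_conv hfc hfi 0 u]; ring

end Conv

section L2

variable {f : ℝ → ℝ} (hfc : Continuous f) (hfi : Integrable f)

include hfc hfi in
lemma conv_sq_lintegral_le {G : ℝ → ℝ} (hG : Measurable G) :
    ∫⁻ x, (‖conv G f x‖₊ : ℝ≥0∞) ^ (2:ℝ) ∂volume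
      ≤ (∫⁻ z, (‖G z‖₊ : ℝ≥0∞) ^ (2:ℝ)) * (∫⁻ y, (‖f y‖₊ : ℝ≥0∞)) ^ 2 := by
  set F : ℝ → ℝ≥0∞ := fun y => (‖f y‖₊ : ℝ≥0∞) with hF_def
  set gE : ℝ → ℝ≥0∞ := fun z => (‖G z‖₊ : ℝ≥0∞) with hgE_def
  have hF : Measurable F := hfc.measurable.nnnorm.coe_nnreal_ennreal
  have hgE : Measurable gE := hG.nnnorm.coe_nnreal_ennreal
  set N := ∫⁻ y, F y with hN_def
  set IG := ∫⁻ z, gE z ^ (2:ℝ) with hIG_def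
  have step1 : ∀ x, (‖conv G f x‖₊ : ℝ≥0∞) ≤ ∫⁻ y, gE (x - y) * F y := by
    intro x
    calc (‖conv G f x‖₊ : ℝ≥0∞) ≤ ∫⁻ y, (‖G (x - y) * f y‖₊ : ℝ≥0∞) :=
          enorm_integral_le_lintegral_enorm _
      _ = ∫⁻ y, gE (x - y) * F y := by
          refine lintegral_congr fun y => ?_
          rw [nnnorm_mul, ENNReal.coe_mul]
  have step2 : ∀ x, (∫⁻ y, gE (x - y) * F y)
      ≤ (∫⁻ y, gE (x - y) ^ (2:ℝ) * F y) ^ (1/2 : ℝ) * N ^ (1/2 : ℝ) := by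
    intro x
    have hconj : Real.HolderConjugate 2 2 := Real.HolderConjugate.two_two
    have hφ : AEMeasurable (fun y => gE (x - y) * F y ^ (1/2 : ℝ)) volume :=
      ((hgE.comp (measurable_const.sub measurable_id)).mul
        (ENNReal.continuous_rpow_const.measurable.comp hF)).aemeasurable
    have hψ : AEMeasurable (fun y => F y ^ (1/2 : ℝ)) volume :=
      (ENNReal.continuous_rpow_const.measurable.comp hF).aemeasurable
    have key := ENNReal.lintegral_mul_le_Lp_mul_Lq volume hconj hφ hψ
    have heq1 : ∀ y : ℝ, (gE (x - y) * F y ^ (1/2 : ℝ)) * F y ^ (1/2 : ℝ) = gE (x - y) * F y := by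
      intro y
      rw [mul_assoc, ← ENNReal.rpow_add_of_nonneg _ _ (by norm_num) (by norm_num)]
      norm_num
    have heq2 : ∀ y : ℝ, (gE (x - y) * F y ^ (1/2 : ℝ)) ^ (2:ℝ) = gE (x - y) ^ (2:ℝ) * F y := by
      intro y
      rw [ENNReal.mul_rpow_of_nonneg _ _ (by norm_num), ← ENNReal.rpow_mul]
      norm_num
    have heq3 : ∀ y : ℝ, (F y ^ (1/2 : ℝ)) ^ (2:ℝ) = F y := by
      intro y
      rw [← ENNReal.rpow_mul]
      norm_num
    calc (∫⁻ y, gE (x - y) * F y)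
        = ∫⁻ y, ((fun y => gE (x - y) * F y ^ (1/2 : ℝ)) * fun y => F y ^ (1/2 : ℝ)) y := by
          refine lintegral_congr fun y => ?_
          simp only [Pi.mul_apply]
          rw [heq1]
      _ ≤ (∫⁻ y, (gE (x - y) * F y ^ (1/2 : ℝ)) ^ (2:ℝ)) ^ (1/2 : ℝ)
            * (∫⁻ y, (F y ^ (1/2 : ℝ)) ^ (2:ℝ)) ^ (1/2 : ℝ) := key
      _ = (∫⁻ y, gE (x - y) ^ (2:ℝ) * F y) ^ (1/2 : ℝ) * N ^ (1/2 : ℝ) := by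
          rw [lintegral_congr heq2, lintegral_congr heq3]
  have step3 : ∀ x, (‖conv G f x‖₊ : ℝ≥0∞) ^ (2:ℝ)
      ≤ (∫⁻ y, gE (x - y) ^ (2:ℝ) * F y) * N := by
    intro x
    have h := (step1 x).trans (step2 x)
    have h2 := ENNReal.rpow_le_rpow h (by norm_num : (0:ℝ) ≤ 2)
    calc (‖conv G f x‖₊ : ℝ≥0∞) ^ (2:ℝ)
        ≤ ((∫⁻ y, gE (x - y) ^ (2:ℝ) * F y) ^ (1/2 : ℝ) * N ^ (1/2 : ℝ)) ^ (2:ℝ) := h2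
      _ = (∫⁻ y, gE (x - y) ^ (2:ℝ) * F y) * N := by
          rw [ENNReal.mul_rpow_of_nonneg _ _ (by norm_num), ← ENNReal.rpow_mul,
            ← ENNReal.rpow_mul]
          norm_num
  have hprod : Measurable (fun p : ℝ × ℝ => gE (p.1 - p.2) ^ (2:ℝ) * F p.2) :=
    (ENNReal.continuous_rpow_const.measurable.comp
      (hgE.comp (measurable_fst.sub measurable_snd))).mul (hF.comp measurable_snd)
  calc ∫⁻ x, (‖conv G f x‖₊ : ℝ≥0∞) ^ (2:ℝ)
      ≤ ∫⁻ x, (∫⁻ y, gE (x - y) ^ (2:ℝ) * F y) * N := lintegral_mono step3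
    _ = (∫⁻ x, ∫⁻ y, gE (x - y) ^ (2:ℝ) * F y) * N :=
        lintegral_mul_const _ (Measurable.lintegral_prod_right hprod)
    _ = (∫⁻ y, ∫⁻ x, gE (x - y) ^ (2:ℝ) * F y) * N := by
        rw [lintegral_lintegral_swap hprod.aemeasurable]
    _ = (∫⁻ y, IG * F y) * N := by
        congr 1
        refine lintegral_congr fun y => ?_
        have hm1 : Measurable fun x : ℝ => gE (x - y) ^ (2:ℝ) :=
          ENNReal.continuous_rpow_const.measurable.comp (hgE.comp (measurable_id.sub measurable_const))
        rw [lintegral_mul_const _ hm1]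
        congr 1
        exact lintegral_sub_right_eq_self (fun z => gE z ^ (2:ℝ)) y
    _ = (IG * N) * N := by rw [lintegral_const_mul _ hF]
    _ = IG * N ^ 2 := by ring

lemma exp_sq_Ee (z : ℝ) : Real.exp (-(2*|z|)) * Real.exp (-(2*|z|)) = Ee 4 z := by
  unfold Ee
  rw [← Real.exp_add]
  congr 1
  ring

lemma G2_sq_lintegral : ∫⁻ z, (‖G2 z‖₊ : ℝ≥0∞) ^ (2:ℝ) = ENNReal.ofReal (1/32) := by
  have h1 : ∀ z : ℝ, (‖G2 z‖₊ : ℝ≥0∞) ^ (2:ℝ) = ENNReal.ofReal ((1/16) * Ee 4 z) := by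
    intro z
    have hnn : 0 ≤ G2 z := by unfold G2; positivity
    rw [← enorm_eq_nnnorm, Real.enorm_eq_ofReal hnn, ENNReal.ofReal_rpow_of_nonneg hnn (by norm_num)]
    congr 1
    rw [show ((2:ℝ)) = ((2:ℕ):ℝ) by norm_num, Real.rpow_natCast]
    unfold G2
    rw [pow_two, ← exp_sq_Ee z]
    ring
  rw [lintegral_congr h1,
    ← ofReal_integral_eq_lintegral_ofReal ((Ee_integrable (by norm_num)).const_mul _)
      (ae_of_all _ fun z => by unfold Ee; positivity)]
  rw [MeasureTheory.integral_const_mul, Ee4_integral]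
  norm_num

lemma G2x_sq_lintegral : ∫⁻ z, (‖G2x z‖₊ : ℝ≥0∞) ^ (2:ℝ) = ENNReal.ofReal (1/8) := by
  have h1 : ∀ᵐ z : ℝ, (‖G2x z‖₊ : ℝ≥0∞) ^ (2:ℝ) = ENNReal.ofReal ((1/4) * Ee 4 z) := by
    filter_upwards [ae_ne 0] with z hz
    rw [← enorm_eq_nnnorm, Real.enorm_eq_ofReal_abs, ENNReal.ofReal_rpow_of_nonneg (abs_nonneg _) (by norm_num)]
    congr 1
    rw [show ((2:ℝ)) = ((2:ℕ):ℝ) by norm_num, Real.rpow_natCast, sq_abs]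
    unfold G2x
    rw [pow_two, ← exp_sq_Ee z]
    rcases hz.lt_or_gt with h | h
    · rw [Real.sign_of_neg h]; ring
    · rw [Real.sign_of_pos h]; ring
  rw [lintegral_congr_ae h1,
    ← ofReal_integral_eq_lintegral_ofReal ((Ee_integrable (by norm_num)).const_mul _)
      (ae_of_all _ fun z => by unfold Ee; positivity)]
  rw [MeasureTheory.integral_const_mul, Ee4_integral]
  norm_num

end L2

/-- If `f` is continuous and integrable and `b = G₂ ∗ f`, then `b` is
continuously differentiable with `b' = ∂ₓG₂ ∗ f`, both `b` and `b'` are in `L²`, and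
`‖b‖_{L²}² + ‖b'‖_{L²}² ≤ (5/32) ‖f‖_{L¹}²`. -/
theorem H1_bound_of_G2_conv (f : ℝ → ℝ) (hfc : Continuous f) (hfi : Integrable f)
    (b : ℝ → ℝ) (hb : b = conv G2 f) :
    (∀ x : ℝ, HasDerivAt b (conv G2x f x) x) ∧ Continuous (deriv b) ∧
      MemLp b 2 volume ∧ MemLp (deriv b) 2 volume ∧
      eLpNorm b 2 volume ^ 2 + eLpNorm (deriv b) 2 volume ^ 2
        ≤ (5 / 32) * eLpNorm f 1 volume ^ 2 := by
  subst hb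
  have hderiv : ∀ x : ℝ, HasDerivAt (conv G2 f) (conv G2x f x) x := conv_G2_hasDeriv hfc hfi
  have hderiv_eq : deriv (conv G2 f) = conv G2x f := funext fun x => (hderiv x).deriv
  have hgcont : Continuous (conv G2x f) := conv_G2x_cont hfc hfi
  have hbcont : Continuous (conv G2 f) :=
    continuous_iff_continuousAt.mpr fun x => (hderiv x).continuousAt
  -- eLpNorm squared identities
  have hsq : ∀ g : ℝ → ℝ, eLpNorm g 2 volume ^ 2 = ∫⁻ x, (‖g x‖₊ : ℝ≥0∞) ^ (2:ℝ) := by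
    intro g
    rw [eLpNorm_eq_lintegral_rpow_enorm_toReal two_ne_zero ENNReal.ofNat_ne_top]
    rw [← ENNReal.rpow_natCast _ 2, ← ENNReal.rpow_mul]
    norm_num
    rfl
  have hN : eLpNorm f 1 volume = ∫⁻ y, (‖f y‖₊ : ℝ≥0∞) := eLpNorm_one_eq_lintegral_enorm
  have hb_bound : eLpNorm (conv G2 f) 2 volume ^ 2
      ≤ ENNReal.ofReal (1/32) * eLpNorm f 1 volume ^ 2 := by
    rw [hsq, hN, ← G2_sq_lintegral]
    exact conv_sq_lintegral_le hfc hfi G2_meas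
  have hb'_bound : eLpNorm (conv G2x f) 2 volume ^ 2
      ≤ ENNReal.ofReal (1/8) * eLpNorm f 1 volume ^ 2 := by
    rw [hsq, hN, ← G2x_sq_lintegral]
    exact conv_sq_lintegral_le hfc hfi G2x_meas
  have hNlt : eLpNorm f 1 volume < ⊤ := by
    rw [hN]; exact hfi.2
  have hNsq_lt : eLpNorm f 1 volume ^ 2 < ⊤ := by
    exact ENNReal.pow_lt_top hNlt
  have hmem : ∀ g : ℝ → ℝ, Continuous g →
      eLpNorm g 2 volume ^ 2 < ⊤ → MemLp g 2 volume := by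
    intro g hgc hlt
    refine ⟨hgc.aestronglyMeasurable, ?_⟩
    rw [lt_top_iff_ne_top]
    intro htop
    rw [htop, ENNReal.top_pow (by norm_num)] at hlt
    exact absurd hlt (lt_irrefl _)
  refine ⟨hderiv, by rw [hderiv_eq]; exact hgcont, ?_, ?_, ?_⟩
  · exact hmem _ hbcont (lt_of_le_of_lt hb_bound (ENNReal.mul_lt_top ENNReal.ofReal_lt_top hNsq_lt))
  · rw [hderiv_eq]
    exact hmem _ hgcont (lt_of_le_of_lt hb'_bound (ENNReal.mul_lt_top ENNReal.ofReal_lt_top hNsq_lt))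
  · rw [hderiv_eq]
    calc eLpNorm (conv G2 f) 2 volume ^ 2 + eLpNorm (conv G2x f) 2 volume ^ 2
        ≤ ENNReal.ofReal (1/32) * eLpNorm f 1 volume ^ 2
          + ENNReal.ofReal (1/8) * eLpNorm f 1 volume ^ 2 := add_le_add hb_bound hb'_bound
      _ = (ENNReal.ofReal (1/32) + ENNReal.ofReal (1/8)) * eLpNorm f 1 volume ^ 2 := by ring
      _ = (5 / 32) * eLpNorm f 1 volume ^ 2 := by
          congr 1
          rw [← ENNReal.ofReal_add (by norm_num) (by norm_num)]
          rw [show (1/32 : ℝ) + 1/8 = 5/32 by norm_num]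
          rw [ENNReal.ofReal_div_of_pos (by norm_num)]
          norm_num
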